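/- arXiv:1504.06496 — 2 statements merged into one kernel-verified Lean document; each statement's English description precedes it below -/
import Mathlib

section
/- Let n = 2m+1 be odd with m ≥ 1. Define permutations of {1,...,n}: s₁ = (2 3)(4 5)···(2m 2m+1) and s₂ = (1 2)(3 4)···(2m−1 2m) (products of disjoint transpositions). Then the commutator [s₁, s₂] = s₁s₂s₁⁻¹s₂⁻¹ is a single cycle of length n. -/
lemma aux_fix {α : Type*} [DecidableEq α] : ∀ {m : ℕ} (g : Fin m → Equiv.Perm α) (x : α),
    (∀ j, g j x = x) → (List.ofFn g).prod x = x := by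
  intro m
  induction m with
  | zero => intro g x _; simp
  | succ m ih =>
    intro g x h
    rw [List.ofFn_succ, List.prod_cons, Equiv.Perm.mul_apply, ih _ x (fun j => h j.succ), h 0]

lemma aux_swap {α : Type*} [DecidableEq α] : ∀ {m : ℕ} (a b : Fin m → α) (k : Fin m),
    (∀ j, j ≠ k → a j ≠ a k ∧ b j ≠ a k ∧ a j ≠ b k ∧ b j ≠ b k) →
    (List.ofFn (fun j => Equiv.swap (a j) (b j))).prod (a k) = b k := by
  intro m
  induction m with
  | zero => exact fun a b k => k.elim0
  | succ m ih =>
    intro a b k h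
    rw [List.ofFn_succ, List.prod_cons, Equiv.Perm.mul_apply]
    rcases Fin.eq_zero_or_eq_succ k with rfl | ⟨k', rfl⟩
    · have hfix : (List.ofFn (fun i : Fin m => Equiv.swap (a i.succ) (b i.succ))).prod (a 0)
          = a 0 := by
        apply aux_fix
        intro j
        obtain ⟨h1, h2, -, -⟩ := h j.succ (Fin.succ_ne_zero j)
        exact Equiv.swap_apply_of_ne_of_ne h1.symm h2.symm
      rw [hfix, Equiv.swap_apply_left]
    · rw [ih (fun i => a i.succ) (fun i => b i.succ) k'
        (fun j hj => h j.succ (by simpa using hj))]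
      obtain ⟨-, -, h3, h4⟩ := h 0 (Fin.succ_ne_zero k').symm
      exact Equiv.swap_apply_of_ne_of_ne h3.symm h4.symm

lemma aux_swap' {α : Type*} [DecidableEq α] {m : ℕ} (a b : Fin m → α) (k : Fin m)
    (h : ∀ j, j ≠ k → a j ≠ a k ∧ b j ≠ a k ∧ a j ≠ b k ∧ b j ≠ b k) :
    (List.ofFn (fun j => Equiv.swap (a j) (b j))).prod (b k) = a k := by
  have he : (List.ofFn (fun j => Equiv.swap (a j) (b j)))
      = (List.ofFn (fun j => Equiv.swap (b j) (a j))) := by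
    congr 1; funext j; exact Equiv.swap_comm _ _
  rw [he]
  exact aux_swap b a k (fun j hj => by
    obtain ⟨h1, h2, h3, h4⟩ := h j hj; exact ⟨h4, h3, h2, h1⟩)

def cycPiFun (m : ℕ) (k : Fin (2 * m + 1)) : Fin (2 * m + 1) :=
  if h : k.val ≤ m then ⟨2 * k.val, by omega⟩
  else ⟨2 * (2 * m - k.val) + 1, by omega⟩

noncomputable def cycPi (m : ℕ) : Equiv.Perm (Fin (2 * m + 1)) :=
  Equiv.ofBijective (cycPiFun m)
    ((Fintype.bijective_iff_injective_and_card _).mpr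
      ⟨by
        intro k l hkl
        have hk := k.isLt
        have hl := l.isLt
        unfold cycPiFun at hkl
        split_ifs at hkl <;> simp only [Fin.mk.injEq] at hkl <;> exact Fin.ext (by omega),
       rfl⟩)

lemma cycPi_val (m : ℕ) (k : Fin (2 * m + 1)) :
    (cycPi m k).val = if k.val ≤ m then 2 * k.val else 2 * (2 * m - k.val) + 1 := by
  show (cycPiFun m k).val = _
  unfold cycPiFun
  split_ifs <;> rfl

lemma fin_lt_a {m : ℕ} (j : Fin m) : 2 * (j : ℕ) + 1 < 2 * m + 1 := by
  have := j.isLt; omega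

lemma fin_lt_b {m : ℕ} (j : Fin m) : 2 * (j : ℕ) + 2 < 2 * m + 1 := by
  have := j.isLt; omega

lemma fin_lt_c {m : ℕ} (j : Fin m) : 2 * (j : ℕ) < 2 * m + 1 := by
  have := j.isLt; omega

/-- value formula for `s₁` -/
lemma sval₁ (m : ℕ) (s₁ : Equiv.Perm (Fin (2 * m + 1)))
    (hs₁ : s₁ = (List.ofFn (fun j : Fin m =>
      Equiv.swap (⟨2 * (j : ℕ) + 1, fin_lt_a j⟩ : Fin (2 * m + 1))
                 (⟨2 * (j : ℕ) + 2, fin_lt_b j⟩ : Fin (2 * m + 1)))).prod)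
    (x : Fin (2 * m + 1)) :
    (s₁ x).val = if x.val = 0 then 0
      else if x.val % 2 = 1 then x.val + 1 else x.val - 1 := by
  have S1a : ∀ j, (hj : j < m) → s₁ (⟨2 * j + 1, by omega⟩ : Fin (2 * m + 1))
      = ⟨2 * j + 2, by omega⟩ := by
    intro j hj
    rw [hs₁]
    have H := aux_swap
      (fun j : Fin m => (⟨2 * (j : ℕ) + 1, by have := j.isLt; omega⟩ : Fin (2 * m + 1)))
      (fun j : Fin m => (⟨2 * (j : ℕ) + 2, by have := j.isLt; omega⟩ : Fin (2 * m + 1)))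
      ⟨j, hj⟩ (by
        intro j' hj'
        have hne : (j' : ℕ) ≠ j := fun hh => hj' (Fin.ext hh)
        refine ⟨?_, ?_, ?_, ?_⟩ <;> simp only [ne_eq, Fin.mk.injEq] <;> omega)
    simpa using H
  have S1b : ∀ j, (hj : j < m) → s₁ (⟨2 * j + 2, by omega⟩ : Fin (2 * m + 1))
      = ⟨2 * j + 1, by omega⟩ := by
    intro j hj
    rw [hs₁]
    have H := aux_swap'
      (fun j : Fin m => (⟨2 * (j : ℕ) + 1, by have := j.isLt; omega⟩ : Fin (2 * m + 1)))
      (fun j : Fin m => (⟨2 * (j : ℕ) + 2, by have := j.isLt; omega⟩ : Fin (2 * m + 1)))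
      ⟨j, hj⟩ (by
        intro j' hj'
        have hne : (j' : ℕ) ≠ j := fun hh => hj' (Fin.ext hh)
        refine ⟨?_, ?_, ?_, ?_⟩ <;> simp only [ne_eq, Fin.mk.injEq] <;> omega)
    simpa using H
  have S1z : s₁ (⟨0, by omega⟩ : Fin (2 * m + 1)) = ⟨0, by omega⟩ := by
    rw [hs₁]
    apply aux_fix
    intro j
    apply Equiv.swap_apply_of_ne_of_ne <;> simp only [ne_eq, Fin.mk.injEq] <;> omega
  have hb := x.isLt
  rcases Nat.even_or_odd x.val with ⟨j, hj⟩ | ⟨j, hj⟩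
  · rcases Nat.eq_zero_or_pos j with h0 | h0
    · have hc1 : x.val = 0 := by omega
      have hx : x = ⟨0, by omega⟩ := Fin.ext hc1
      rw [if_pos hc1, hx, S1z]
    · have hc1 : ¬ x.val = 0 := by omega
      have hc2 : ¬ x.val % 2 = 1 := by omega
      have hv : x.val = 2 * (j - 1) + 2 := by omega
      have hx : x = ⟨2 * (j - 1) + 2, by omega⟩ := Fin.ext hv
      rw [if_neg hc1, if_neg hc2, hx, S1b (j - 1) (by omega)]
      all_goals simp only [Fin.val_mk]
      all_goals omega
  · have hc1 : ¬ x.val = 0 := by omega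
    have hc2 : x.val % 2 = 1 := by omega
    have hv : x.val = 2 * j + 1 := by omega
    have hx : x = ⟨2 * j + 1, by omega⟩ := Fin.ext hv
    rw [if_neg hc1, if_pos hc2, hx, S1a j (by omega)]
    all_goals simp only [Fin.val_mk]
    all_goals omega

/-- value formula for `s₂` -/
lemma sval₂ (m : ℕ) (s₂ : Equiv.Perm (Fin (2 * m + 1)))
    (hs₂ : s₂ = (List.ofFn (fun j : Fin m =>
      Equiv.swap (⟨2 * (j : ℕ), fin_lt_c j⟩ : Fin (2 * m + 1))
                 (⟨2 * (j : ℕ) + 1, fin_lt_a j⟩ : Fin (2 * m + 1)))).prod)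
    (x : Fin (2 * m + 1)) :
    (s₂ x).val = if x.val = 2 * m then 2 * m
      else if x.val % 2 = 0 then x.val + 1 else x.val - 1 := by
  have S2a : ∀ j, (hj : j < m) → s₂ (⟨2 * j, by omega⟩ : Fin (2 * m + 1))
      = ⟨2 * j + 1, by omega⟩ := by
    intro j hj
    rw [hs₂]
    have H := aux_swap
      (fun j : Fin m => (⟨2 * (j : ℕ), by have := j.isLt; omega⟩ : Fin (2 * m + 1)))
      (fun j : Fin m => (⟨2 * (j : ℕ) + 1, by have := j.isLt; omega⟩ : Fin (2 * m + 1)))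
      ⟨j, hj⟩ (by
        intro j' hj'
        have hne : (j' : ℕ) ≠ j := fun hh => hj' (Fin.ext hh)
        refine ⟨?_, ?_, ?_, ?_⟩ <;> simp only [ne_eq, Fin.mk.injEq] <;> omega)
    simpa using H
  have S2b : ∀ j, (hj : j < m) → s₂ (⟨2 * j + 1, by omega⟩ : Fin (2 * m + 1))
      = ⟨2 * j, by omega⟩ := by
    intro j hj
    rw [hs₂]
    have H := aux_swap'
      (fun j : Fin m => (⟨2 * (j : ℕ), by have := j.isLt; omega⟩ : Fin (2 * m + 1)))
      (fun j : Fin m => (⟨2 * (j : ℕ) + 1, by have := j.isLt; omega⟩ : Fin (2 * m + 1)))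
      ⟨j, hj⟩ (by
        intro j' hj'
        have hne : (j' : ℕ) ≠ j := fun hh => hj' (Fin.ext hh)
        refine ⟨?_, ?_, ?_, ?_⟩ <;> simp only [ne_eq, Fin.mk.injEq] <;> omega)
    simpa using H
  have S2z : s₂ (⟨2 * m, by omega⟩ : Fin (2 * m + 1)) = ⟨2 * m, by omega⟩ := by
    rw [hs₂]
    apply aux_fix
    intro j
    have := j.isLt
    apply Equiv.swap_apply_of_ne_of_ne <;> simp only [ne_eq, Fin.mk.injEq] <;> omega
  have hb := x.isLt
  rcases Nat.even_or_odd x.val with ⟨j, hj⟩ | ⟨j, hj⟩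
  · rcases Nat.lt_or_ge j m with h0 | h0
    · have hc1 : ¬ x.val = 2 * m := by omega
      have hc2 : x.val % 2 = 0 := by omega
      have hv : x.val = 2 * j := by omega
      have hx : x = ⟨2 * j, by omega⟩ := Fin.ext hv
      rw [if_neg hc1, if_pos hc2, hx, S2a j h0]
      all_goals simp only [Fin.val_mk]
      all_goals omega
    · have hc1 : x.val = 2 * m := by omega
      have hx : x = ⟨2 * m, by omega⟩ := Fin.ext hc1
      rw [if_pos hc1, hx, S2z]
  · have hc1 : ¬ x.val = 2 * m := by omega
    have hc2 : ¬ x.val % 2 = 0 := by omega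
    have hv : x.val = 2 * j + 1 := by omega
    have hx : x = ⟨2 * j + 1, by omega⟩ := Fin.ext hv
    rw [if_neg hc1, if_neg hc2, hx, S2b j (by omega)]
    all_goals simp only [Fin.val_mk]
    all_goals omega

/-- For odd `n = 2m+1`, with `s₁ = (2 3)(4 5)⋯(2m 2m+1)` and
`s₂ = (1 2)(3 4)⋯(2m-1 2m)` (written `0`-based on `Fin (2m+1)`),
the commutator `s₁ s₂ s₁⁻¹ s₂⁻¹` is a single cycle of length `n`. -/
theorem stmt_5 (m : ℕ) (hm : 1 ≤ m)
    (s₁ s₂ : Equiv.Perm (Fin (2 * m + 1)))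
    (hs₁ : s₁ = (List.ofFn (fun j : Fin m =>
      Equiv.swap (⟨2 * (j : ℕ) + 1, by have := j.isLt; omega⟩ : Fin (2 * m + 1))
                 (⟨2 * (j : ℕ) + 2, by have := j.isLt; omega⟩ : Fin (2 * m + 1)))).prod)
    (hs₂ : s₂ = (List.ofFn (fun j : Fin m =>
      Equiv.swap (⟨2 * (j : ℕ), by have := j.isLt; omega⟩ : Fin (2 * m + 1))
                 (⟨2 * (j : ℕ) + 1, by have := j.isLt; omega⟩ : Fin (2 * m + 1)))).prod) :
    (s₁ * s₂ * s₁⁻¹ * s₂⁻¹).IsCycle ∧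
      (s₁ * s₂ * s₁⁻¹ * s₂⁻¹).support = Finset.univ := by
  have hS1 := sval₁ m s₁ hs₁
  have hS2 := sval₂ m s₂ hs₂
  clear hs₁ hs₂
  -- s₁, s₂ are involutions
  have hsq1 : s₁ * s₁ = 1 := by
    apply Equiv.ext
    intro x
    apply Fin.ext
    simp only [Equiv.Perm.mul_apply, Equiv.Perm.one_apply]
    have h1 := hS1 x
    have h2 := hS1 (s₁ x)
    have hb := x.isLt
    have hb1 := (s₁ x).isLt
    split_ifs at h1 h2 <;> omega
  have hsq2 : s₂ * s₂ = 1 := by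
    apply Equiv.ext
    intro x
    apply Fin.ext
    simp only [Equiv.Perm.mul_apply, Equiv.Perm.one_apply]
    have h1 := hS2 x
    have h2 := hS2 (s₂ x)
    have hb := x.isLt
    have hb1 := (s₂ x).isLt
    split_ifs at h1 h2 <;> omega
  have hinv1 : s₁⁻¹ = s₁ := inv_eq_of_mul_eq_one_right hsq1
  have hinv2 : s₂⁻¹ = s₂ := inv_eq_of_mul_eq_one_right hsq2
  -- value formula for finRotate
  have hfin : ∀ k : Fin (2 * m + 1),
      ((finRotate (2 * m + 1)) k).val = if k.val = 2 * m then 0 else k.val + 1 := by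
    intro k
    rw [finRotate_succ_apply, Fin.val_add_one]
    by_cases h : k = Fin.last (2 * m)
    · rw [if_pos h, if_pos (by rw [h]; rfl)]
    · rw [if_neg h, if_neg (fun hv => h (Fin.ext (by simpa using hv)))]
  -- conjugation identity
  have key : ∀ k : Fin (2 * m + 1),
      s₁ (s₂ (cycPi m k)) = cycPi m ((finRotate (2 * m + 1)) k) := by
    intro k
    apply Fin.ext
    have hk := k.isLt
    have h1 := cycPi_val m k
    have hb1 := (cycPi m k).isLt
    have h2 := hS2 (cycPi m k)
    have hb2 := (s₂ (cycPi m k)).isLt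
    have h3 := hS1 (s₂ (cycPi m k))
    have hb3 := (s₁ (s₂ (cycPi m k))).isLt
    have h4 := hfin k
    have hb4 := ((finRotate (2 * m + 1)) k).isLt
    have h5 := cycPi_val m ((finRotate (2 * m + 1)) k)
    have hb5 := (cycPi m ((finRotate (2 * m + 1)) k)).isLt
    split_ifs at h1 h2 h3 h4 h5 <;> omega
  have hconj : s₁ * s₂ = cycPi m * finRotate (2 * m + 1) * (cycPi m)⁻¹ := by
    apply Equiv.ext
    intro x
    have hx := key ((cycPi m)⁻¹ x)
    rw [← Equiv.Perm.mul_apply (cycPi m) (cycPi m)⁻¹ x, mul_inv_cancel, Equiv.Perm.one_apply] at hx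
    simp only [Equiv.Perm.mul_apply]
    exact hx
  have hT : (s₁ * s₂).IsCycle := by
    rw [hconj]
    exact (isCycle_finRotate_of_le (by omega)).conj
  have hTs : (s₁ * s₂).support = Finset.univ := by
    rw [hconj, Equiv.Perm.support_conj, support_finRotate_of_le (by omega)]
    simp
  have hord : orderOf (s₁ * s₂) = 2 * m + 1 := by
    rw [hT.orderOf, hTs, Finset.card_univ, Fintype.card_fin]
  have hcop : Nat.Coprime 2 (orderOf (s₁ * s₂)) := by
    rw [hord, Nat.coprime_two_left]
    exact ⟨m, rfl⟩
  have hc : s₁ * s₂ * s₁⁻¹ * s₂⁻¹ = (s₁ * s₂) ^ 2 := by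
    rw [hinv1, hinv2, pow_two, mul_assoc]
  constructor
  · rw [hc]
    exact hT.pow_iff.mpr hcop
  · rw [hc, Equiv.Perm.support_pow_coprime hcop, hTs]
end

section
/- Let n = 2m be even with m ≥ 2. Define permutations of {1,...,n}: s₁ = (2 3)(4 5)···(2m−2 2m−1) and s₂ = (1 2)(3 4)···(2m−1 2m). Then the commutator [s₁, s₂] is a product of two disjoint cycles each of length m = n/2. -/
private lemma list_prod_apply_eq_self {α : Type*} (l : List (Equiv.Perm α)) (x : α)
    (h : ∀ σ ∈ l, σ x = x) : l.prod x = x := by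
  induction l with
  | nil => simp
  | cons hd tl ih =>
    simp only [List.prod_cons, Equiv.Perm.mul_apply]
    rw [ih (fun σ hσ => h σ (List.mem_cons_of_mem _ hσ)), h hd List.mem_cons_self]

private lemma disjoint_swap_of_ne {α : Type*} [DecidableEq α] {a b c d : α}
    (h1 : a ≠ c) (h2 : a ≠ d) (h3 : b ≠ c) (h4 : b ≠ d) :
    Equiv.Perm.Disjoint (Equiv.swap a b) (Equiv.swap c d) := by
  intro x
  by_cases hx : x = a ∨ x = b
  · right
    rcases hx with rfl | rfl
    · exact Equiv.swap_apply_of_ne_of_ne h1 h2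
    · exact Equiv.swap_apply_of_ne_of_ne h3 h4
  · left
    push_neg at hx
    exact Equiv.swap_apply_of_ne_of_ne hx.1 hx.2

private lemma formPerm_ofFn_apply {α : Type*} [DecidableEq α] {k : ℕ} (f : Fin k → α)
    (hf : Function.Injective f) (j : Fin k) :
    (List.ofFn f).formPerm (f j) = f ⟨((j : ℕ) + 1) % k, Nat.mod_lt _ j.pos⟩ := by
  have h2 : f j = (List.ofFn f)[(j : ℕ)]'(by simp [j.isLt]) := by simp
  rw [h2, List.formPerm_apply_getElem _ (List.nodup_ofFn.mpr hf)]
  simp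

private def Af (m : ℕ) : Fin m → Fin (2 * m) := fun j =>
  ⟨if 2 * (j : ℕ) < m then 4 * (j : ℕ) else 4 * m - 4 * (j : ℕ) - 1,
    by have := j.isLt; split <;> omega⟩

private def Bf (m : ℕ) : Fin m → Fin (2 * m) := fun j =>
  ⟨if 2 * (j : ℕ) + 1 < m then 4 * (j : ℕ) + 2 else 4 * m - 4 * (j : ℕ) - 3,
    by have := j.isLt; split <;> omega⟩

private lemma Af_val (m : ℕ) (j : Fin m) :
    ((Af m j : Fin (2 * m)) : ℕ)
      = if 2 * (j : ℕ) < m then 4 * (j : ℕ) else 4 * m - 4 * (j : ℕ) - 1 := rfl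

private lemma Bf_val (m : ℕ) (j : Fin m) :
    ((Bf m j : Fin (2 * m)) : ℕ)
      = if 2 * (j : ℕ) + 1 < m then 4 * (j : ℕ) + 2 else 4 * m - 4 * (j : ℕ) - 3 := rfl

private lemma Af_inj (m : ℕ) : Function.Injective (Af m) := by
  intro i j h
  have hi := i.isLt; have hj := j.isLt
  have h' := congrArg Fin.val h
  rw [Af_val, Af_val] at h'
  apply Fin.ext
  split_ifs at h' <;> omega

private lemma Bf_inj (m : ℕ) : Function.Injective (Bf m) := by
  intro i j h
  have hi := i.isLt; have hj := j.isLt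
  have h' := congrArg Fin.val h
  rw [Bf_val, Bf_val] at h'
  apply Fin.ext
  split_ifs at h' <;> omega

private lemma Af_not_mem (m : ℕ) (j : Fin m) : Af m j ∉ List.ofFn (Bf m) := by
  rw [List.mem_ofFn]
  rintro ⟨i, hi⟩
  have h' := congrArg Fin.val hi
  have h1 := i.isLt; have h2 := j.isLt
  rw [Af_val, Bf_val] at h'
  split_ifs at h' <;> omega

private lemma Bf_not_mem (m : ℕ) (j : Fin m) : Bf m j ∉ List.ofFn (Af m) := by
  rw [List.mem_ofFn]
  rintro ⟨i, hi⟩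
  have h' := congrArg Fin.val hi
  have h1 := i.isLt; have h2 := j.isLt
  rw [Af_val, Bf_val] at h'
  split_ifs at h' <;> omega

private lemma cover (m : ℕ) (x : Fin (2 * m)) :
    (∃ j, x = Af m j) ∨ (∃ j, x = Bf m j) := by
  have hx := x.isLt
  by_cases h0 : (x : ℕ) % 4 = 0
  · refine Or.inl ⟨⟨(x : ℕ) / 4, by omega⟩, Fin.ext ?_⟩
    rw [Af_val]; split_ifs with h <;> simp only [Fin.val_mk] at * <;> omega
  by_cases h3 : (x : ℕ) % 4 = 3
  · refine Or.inl ⟨⟨(4 * m - 1 - (x : ℕ)) / 4, by omega⟩, Fin.ext ?_⟩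
    rw [Af_val]; split_ifs with h <;> simp only [Fin.val_mk] at * <;> omega
  by_cases h2 : (x : ℕ) % 4 = 2
  · refine Or.inr ⟨⟨((x : ℕ) - 2) / 4, by omega⟩, Fin.ext ?_⟩
    rw [Bf_val]; split_ifs with h <;> simp only [Fin.val_mk] at * <;> omega
  · refine Or.inr ⟨⟨(4 * m - 3 - (x : ℕ)) / 4, by omega⟩, Fin.ext ?_⟩
    rw [Bf_val]; split_ifs with h <;> simp only [Fin.val_mk] at * <;> omega

/-- For even `n = 2m`, `m ≥ 2`, with `s₁ = (2 3)(4 5)⋯(2m-2 2m-1)` and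
`s₂ = (1 2)(3 4)⋯(2m-1 2m)` (written `0`-based on `Fin (2m)`),
the commutator `s₁ s₂ s₁⁻¹ s₂⁻¹` is a product of two disjoint cycles of length `m`,
i.e. its cycle type is `{m, m}`. -/
theorem stmt_6 (m : ℕ) (hm : 2 ≤ m)
    (s₁ s₂ : Equiv.Perm (Fin (2 * m)))
    (hs₁ : s₁ = (List.ofFn (fun j : Fin (m - 1) =>
      Equiv.swap (⟨2 * (j : ℕ) + 1, by have := j.isLt; omega⟩ : Fin (2 * m))
                 (⟨2 * (j : ℕ) + 2, by have := j.isLt; omega⟩ : Fin (2 * m)))).prod)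
    (hs₂ : s₂ = (List.ofFn (fun j : Fin m =>
      Equiv.swap (⟨2 * (j : ℕ), by have := j.isLt; omega⟩ : Fin (2 * m))
                 (⟨2 * (j : ℕ) + 1, by have := j.isLt; omega⟩ : Fin (2 * m)))).prod) :
    (s₁ * s₂ * s₁⁻¹ * s₂⁻¹).cycleType = {m, m} := by
  -- pointwise formula for s₂
  have hv₂ : ∀ x : Fin (2 * m),
      (s₂ x : ℕ) = if (x : ℕ) % 2 = 0 then (x : ℕ) + 1 else (x : ℕ) - 1 := by
    intro x
    have hxlt := x.isLt
    obtain ⟨k, hkm, hxk⟩ : ∃ k, k < m ∧ ((x : ℕ) = 2 * k ∨ (x : ℕ) = 2 * k + 1) :=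
      ⟨(x : ℕ) / 2, by omega, by omega⟩
    obtain ⟨a, ha⟩ : ∃ a : Fin (2 * m), (a : ℕ) = 2 * k := ⟨⟨2 * k, by omega⟩, rfl⟩
    obtain ⟨b, hb⟩ : ∃ b : Fin (2 * m), (b : ℕ) = 2 * k + 1 := ⟨⟨2 * k + 1, by omega⟩, rfl⟩
    have hmem : Equiv.swap a b ∈ List.ofFn (fun j : Fin m =>
        Equiv.swap (⟨2 * (j : ℕ), by have := j.isLt; omega⟩ : Fin (2 * m))
                   (⟨2 * (j : ℕ) + 1, by have := j.isLt; omega⟩ : Fin (2 * m))) := by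
      rw [List.mem_ofFn]
      exact ⟨⟨k, hkm⟩, congrArg₂ Equiv.swap
        (Fin.ext (by simp only [Fin.val_mk]; omega))
        (Fin.ext (by simp only [Fin.val_mk]; omega))⟩
    have hpair : (List.ofFn (fun j : Fin m =>
        Equiv.swap (⟨2 * (j : ℕ), by have := j.isLt; omega⟩ : Fin (2 * m))
                   (⟨2 * (j : ℕ) + 1, by have := j.isLt; omega⟩ : Fin (2 * m)))).Pairwise
        Equiv.Perm.Disjoint := by
      rw [List.pairwise_ofFn]
      intro i j hij
      have hij' : (i : ℕ) < (j : ℕ) := hij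
      apply disjoint_swap_of_ne <;>
        exact fun h => by
          have h' := congrArg Fin.val h
          simp only [Fin.val_mk] at h'
          omega
    have hane : a ≠ b := fun h => by
      have h' := congrArg Fin.val h
      omega
    rcases hxk with hxk | hxk
    · have hxa : x = a := Fin.ext (by omega)
      have hsup : x ∈ (Equiv.swap a b).support := by
        rw [Equiv.Perm.mem_support, hxa, Equiv.swap_apply_left]
        exact hane.symm
      have key := Equiv.Perm.eq_on_support_mem_disjoint hmem hpair x hsup
      rw [hs₂, ← key, hxa, Equiv.swap_apply_left, if_pos (by omega)]
      omega
    · have hxa : x = b := Fin.ext (by omega)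
      have hsup : x ∈ (Equiv.swap a b).support := by
        rw [Equiv.Perm.mem_support, hxa, Equiv.swap_apply_right]
        exact hane
      have key := Equiv.Perm.eq_on_support_mem_disjoint hmem hpair x hsup
      rw [hs₂, ← key, hxa, Equiv.swap_apply_right, if_neg (by omega)]
      omega
  -- pointwise formula for s₁
  have hv₁ : ∀ x : Fin (2 * m),
      (s₁ x : ℕ) = if (x : ℕ) = 0 ∨ (x : ℕ) = 2 * m - 1 then (x : ℕ)
        else if (x : ℕ) % 2 = 1 then (x : ℕ) + 1 else (x : ℕ) - 1 := by
    intro x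
    have hxlt := x.isLt
    by_cases hx0 : (x : ℕ) = 0 ∨ (x : ℕ) = 2 * m - 1
    · rw [if_pos hx0, hs₁, list_prod_apply_eq_self]
      intro σ hσ
      rw [List.mem_ofFn] at hσ
      obtain ⟨j, rfl⟩ := hσ
      have hj := j.isLt
      apply Equiv.swap_apply_of_ne_of_ne <;>
        exact fun h => by
          have h' := congrArg Fin.val h
          simp only [Fin.val_mk] at h'
          omega
    · rw [if_neg hx0]
      push_neg at hx0
      obtain ⟨k, hkm, hxk⟩ : ∃ k, k < m - 1 ∧ ((x : ℕ) = 2 * k + 1 ∨ (x : ℕ) = 2 * k + 2) :=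
        ⟨((x : ℕ) - 1) / 2, by omega, by omega⟩
      obtain ⟨a, ha⟩ : ∃ a : Fin (2 * m), (a : ℕ) = 2 * k + 1 := ⟨⟨2 * k + 1, by omega⟩, rfl⟩
      obtain ⟨b, hb⟩ : ∃ b : Fin (2 * m), (b : ℕ) = 2 * k + 2 := ⟨⟨2 * k + 2, by omega⟩, rfl⟩
      have hmem : Equiv.swap a b ∈ List.ofFn (fun j : Fin (m - 1) =>
          Equiv.swap (⟨2 * (j : ℕ) + 1, by have := j.isLt; omega⟩ : Fin (2 * m))
                     (⟨2 * (j : ℕ) + 2, by have := j.isLt; omega⟩ : Fin (2 * m))) := by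
        rw [List.mem_ofFn]
        exact ⟨⟨k, hkm⟩, congrArg₂ Equiv.swap
          (Fin.ext (by simp only [Fin.val_mk]; omega))
          (Fin.ext (by simp only [Fin.val_mk]; omega))⟩
      have hpair : (List.ofFn (fun j : Fin (m - 1) =>
          Equiv.swap (⟨2 * (j : ℕ) + 1, by have := j.isLt; omega⟩ : Fin (2 * m))
                     (⟨2 * (j : ℕ) + 2, by have := j.isLt; omega⟩ : Fin (2 * m)))).Pairwise
          Equiv.Perm.Disjoint := by
        rw [List.pairwise_ofFn]
        intro i j hij
        have hij' : (i : ℕ) < (j : ℕ) := hij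
        apply disjoint_swap_of_ne <;>
          exact fun h => by
            have h' := congrArg Fin.val h
            simp only [Fin.val_mk] at h'
            omega
      have hane : a ≠ b := fun h => by
        have h' := congrArg Fin.val h
        omega
      rcases hxk with hxk | hxk
      · have hxa : x = a := Fin.ext (by omega)
        have hsup : x ∈ (Equiv.swap a b).support := by
          rw [Equiv.Perm.mem_support, hxa, Equiv.swap_apply_left]
          exact hane.symm
        have key := Equiv.Perm.eq_on_support_mem_disjoint hmem hpair x hsup
        rw [hs₁, ← key, hxa, Equiv.swap_apply_left, if_pos (by omega)]
        omega
      · have hxa : x = b := Fin.ext (by omega)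
        have hsup : x ∈ (Equiv.swap a b).support := by
          rw [Equiv.Perm.mem_support, hxa, Equiv.swap_apply_right]
          exact hane
        have key := Equiv.Perm.eq_on_support_mem_disjoint hmem hpair x hsup
        rw [hs₁, ← key, hxa, Equiv.swap_apply_right, if_neg (by omega)]
        omega
  -- involutions
  have hsq₁ : s₁ * s₁ = 1 := by
    clear hs₁ hs₂
    refine Equiv.ext fun x => Fin.ext ?_
    have hxlt := x.isLt
    simp only [Equiv.Perm.mul_apply, Equiv.Perm.one_apply]
    rw [hv₁, hv₁]
    split_ifs <;> (try simp_all only [false_or, or_false, true_or, or_true, not_true, not_false_iff]) <;> omega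
  have hsq₂ : s₂ * s₂ = 1 := by
    clear hs₁ hs₂
    refine Equiv.ext fun x => Fin.ext ?_
    have hxlt := x.isLt
    simp only [Equiv.Perm.mul_apply, Equiv.Perm.one_apply]
    rw [hv₂, hv₂]
    split_ifs <;> (try simp_all only [false_or, or_false, true_or, or_true, not_true, not_false_iff]) <;> omega
  -- closed form for the commutator
  have hcomm : ∀ x : Fin (2 * m), ((s₁ (s₂ (s₁ (s₂ x)))) : ℕ) =
      if (x : ℕ) % 2 = 0 then
        (if (x : ℕ) = 2 * m - 4 then 2 * m - 1
         else if (x : ℕ) = 2 * m - 2 then 2 * m - 3 else (x : ℕ) + 4)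
      else
        (if (x : ℕ) = 1 then 2 else if (x : ℕ) = 3 then 0 else (x : ℕ) - 4) := by
    clear hs₁ hs₂ hsq₁ hsq₂
    intro x
    have hxlt := x.isLt
    rcases (by omega : ((x : ℕ) % 2 = 0 ∧ (x : ℕ) = 2 * m - 4) ∨
        ((x : ℕ) % 2 = 0 ∧ (x : ℕ) = 2 * m - 2 ∧ (x : ℕ) ≠ 2 * m - 4) ∨
        ((x : ℕ) % 2 = 0 ∧ (x : ℕ) ≠ 2 * m - 4 ∧ (x : ℕ) ≠ 2 * m - 2) ∨
        (x : ℕ) = 1 ∨ (x : ℕ) = 3 ∨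
        ((x : ℕ) % 2 = 1 ∧ 5 ≤ (x : ℕ))) with hx | hx | hx | hx | hx | hx
    · have e1 : ((s₂ x : Fin (2 * m)) : ℕ) = 2 * m - 3 := by
        rw [hv₂, if_pos (show (x : ℕ) % 2 = 0 by omega)]
        try omega
      have e2 : ((s₁ (s₂ x) : Fin (2 * m)) : ℕ) = 2 * m - 2 := by
        rw [hv₁, e1, if_neg (show ¬(2 * m - 3 = 0 ∨ 2 * m - 3 = 2 * m - 1) by omega), if_pos (show (2 * m - 3) % 2 = 1 by omega)]
        try omega
      have e3 : ((s₂ (s₁ (s₂ x)) : Fin (2 * m)) : ℕ) = 2 * m - 1 := by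
        rw [hv₂, e2, if_pos (show (2 * m - 2) % 2 = 0 by omega)]
        try omega
      rw [hv₁, e3, if_pos (show 2 * m - 1 = 0 ∨ 2 * m - 1 = 2 * m - 1 by omega), if_pos (show (x : ℕ) % 2 = 0 by omega), if_pos (show (x : ℕ) = 2 * m - 4 by omega)]
      try omega
    · have e1 : ((s₂ x : Fin (2 * m)) : ℕ) = 2 * m - 1 := by
        rw [hv₂, if_pos (show (x : ℕ) % 2 = 0 by omega)]
        try omega
      have e2 : ((s₁ (s₂ x) : Fin (2 * m)) : ℕ) = 2 * m - 1 := by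
        rw [hv₁, e1, if_pos (show 2 * m - 1 = 0 ∨ 2 * m - 1 = 2 * m - 1 by omega)]
        try omega
      have e3 : ((s₂ (s₁ (s₂ x)) : Fin (2 * m)) : ℕ) = 2 * m - 2 := by
        rw [hv₂, e2, if_neg (show ¬((2 * m - 1) % 2 = 0) by omega)]
        try omega
      rw [hv₁, e3, if_neg (show ¬(2 * m - 2 = 0 ∨ 2 * m - 2 = 2 * m - 1) by omega), if_neg (show ¬((2 * m - 2) % 2 = 1) by omega), if_pos (show (x : ℕ) % 2 = 0 by omega), if_neg (show ¬((x : ℕ) = 2 * m - 4) by omega), if_pos (show (x : ℕ) = 2 * m - 2 by omega)]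
      try omega
    · have e1 : ((s₂ x : Fin (2 * m)) : ℕ) = (x : ℕ) + 1 := by
        rw [hv₂, if_pos (show (x : ℕ) % 2 = 0 by omega)]
        try omega
      have e2 : ((s₁ (s₂ x) : Fin (2 * m)) : ℕ) = (x : ℕ) + 2 := by
        rw [hv₁, e1, if_neg (show ¬((x : ℕ) + 1 = 0 ∨ (x : ℕ) + 1 = 2 * m - 1) by omega), if_pos (show ((x : ℕ) + 1) % 2 = 1 by omega)]
        try omega
      have e3 : ((s₂ (s₁ (s₂ x)) : Fin (2 * m)) : ℕ) = (x : ℕ) + 3 := by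
        rw [hv₂, e2, if_pos (show ((x : ℕ) + 2) % 2 = 0 by omega)]
        try omega
      rw [hv₁, e3, if_neg (show ¬((x : ℕ) + 3 = 0 ∨ (x : ℕ) + 3 = 2 * m - 1) by omega), if_pos (show ((x : ℕ) + 3) % 2 = 1 by omega), if_pos (show (x : ℕ) % 2 = 0 by omega), if_neg (show ¬((x : ℕ) = 2 * m - 4) by omega), if_neg (show ¬((x : ℕ) = 2 * m - 2) by omega)]
      try omega
    · have e1 : ((s₂ x : Fin (2 * m)) : ℕ) = 0 := by
        rw [hv₂, if_neg (show ¬((x : ℕ) % 2 = 0) by omega)]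
        try omega
      have e2 : ((s₁ (s₂ x) : Fin (2 * m)) : ℕ) = 0 := by
        rw [hv₁, e1, if_pos (show 0 = 0 ∨ 0 = 2 * m - 1 by omega)]
        try omega
      have e3 : ((s₂ (s₁ (s₂ x)) : Fin (2 * m)) : ℕ) = 1 := by
        rw [hv₂, e2, if_pos (show 0 % 2 = 0 by omega)]
        try omega
      rw [hv₁, e3, if_neg (show ¬(1 = 0 ∨ 1 = 2 * m - 1) by omega), if_pos (show 1 % 2 = 1 by omega), if_neg (show ¬((x : ℕ) % 2 = 0) by omega), if_pos (show (x : ℕ) = 1 by omega)]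
      try omega
    · have e1 : ((s₂ x : Fin (2 * m)) : ℕ) = 2 := by
        rw [hv₂, if_neg (show ¬((x : ℕ) % 2 = 0) by omega)]
        try omega
      have e2 : ((s₁ (s₂ x) : Fin (2 * m)) : ℕ) = 1 := by
        rw [hv₁, e1, if_neg (show ¬(2 = 0 ∨ 2 = 2 * m - 1) by omega), if_neg (show ¬(2 % 2 = 1) by omega)]
        try omega
      have e3 : ((s₂ (s₁ (s₂ x)) : Fin (2 * m)) : ℕ) = 0 := by
        rw [hv₂, e2, if_neg (show ¬(1 % 2 = 0) by omega)]
        try omega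
      rw [hv₁, e3, if_pos (show 0 = 0 ∨ 0 = 2 * m - 1 by omega), if_neg (show ¬((x : ℕ) % 2 = 0) by omega), if_neg (show ¬((x : ℕ) = 1) by omega), if_pos (show (x : ℕ) = 3 by omega)]
      try omega
    · have e1 : ((s₂ x : Fin (2 * m)) : ℕ) = (x : ℕ) - 1 := by
        rw [hv₂, if_neg (show ¬((x : ℕ) % 2 = 0) by omega)]
        try omega
      have e2 : ((s₁ (s₂ x) : Fin (2 * m)) : ℕ) = (x : ℕ) - 2 := by
        rw [hv₁, e1, if_neg (show ¬((x : ℕ) - 1 = 0 ∨ (x : ℕ) - 1 = 2 * m - 1) by omega), if_neg (show ¬(((x : ℕ) - 1) % 2 = 1) by omega)]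
        try omega
      have e3 : ((s₂ (s₁ (s₂ x)) : Fin (2 * m)) : ℕ) = (x : ℕ) - 3 := by
        rw [hv₂, e2, if_neg (show ¬(((x : ℕ) - 2) % 2 = 0) by omega)]
        try omega
      rw [hv₁, e3, if_neg (show ¬((x : ℕ) - 3 = 0 ∨ (x : ℕ) - 3 = 2 * m - 1) by omega), if_neg (show ¬(((x : ℕ) - 3) % 2 = 1) by omega), if_neg (show ¬((x : ℕ) % 2 = 0) by omega), if_neg (show ¬((x : ℕ) = 1) by omega), if_neg (show ¬((x : ℕ) = 3) by omega)]
      try omega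
  -- the commutator equals the product of two explicit disjoint cycles
  have hmain : s₁ * s₂ * s₁⁻¹ * s₂⁻¹ =
      (List.ofFn (Af m)).formPerm * (List.ofFn (Bf m)).formPerm := by
    rw [inv_eq_of_mul_eq_one_right hsq₁, inv_eq_of_mul_eq_one_right hsq₂]
    refine Equiv.ext fun x => ?_
    rcases cover m x with ⟨j, rfl⟩ | ⟨j, rfl⟩
    · have hrhs : ((List.ofFn (Af m)).formPerm * (List.ofFn (Bf m)).formPerm) (Af m j)
          = Af m ⟨((j : ℕ) + 1) % m, Nat.mod_lt _ j.pos⟩ := by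
        rw [Equiv.Perm.mul_apply, List.formPerm_apply_of_notMem (Af_not_mem m j),
          formPerm_ofFn_apply _ (Af_inj m)]
      rw [hrhs]
      apply Fin.ext
      simp only [Equiv.Perm.mul_apply]
      have hj := j.isLt
      have hj' : ((j : ℕ) + 1) % m < m := Nat.mod_lt _ j.pos
      have hA2 : ((Af m ⟨((j : ℕ) + 1) % m, Nat.mod_lt _ j.pos⟩ : Fin (2 * m)) : ℕ)
          = if 2 * (((j : ℕ) + 1) % m) < m then 4 * (((j : ℕ) + 1) % m)
            else 4 * m - 4 * (((j : ℕ) + 1) % m) - 1 := rfl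
      have hmod : (((j : ℕ) + 1) % m = (j : ℕ) + 1 ∧ (j : ℕ) + 1 < m) ∨
          (((j : ℕ) + 1) % m = 0 ∧ (j : ℕ) + 1 = m) := by
        rcases Nat.lt_or_ge ((j : ℕ) + 1) m with h | h
        · exact Or.inl ⟨Nat.mod_eq_of_lt h, h⟩
        · have heq : (j : ℕ) + 1 = m := by omega
          exact Or.inr ⟨by rw [heq, Nat.mod_self], heq⟩
      rcases hmod with ⟨hmod, hlt⟩ | ⟨hmod, heq⟩ <;>
        rw [hcomm, hA2, Af_val, hmod] <;> split_ifs <;> omega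
    · have hrhs : ((List.ofFn (Af m)).formPerm * (List.ofFn (Bf m)).formPerm) (Bf m j)
          = Bf m ⟨((j : ℕ) + 1) % m, Nat.mod_lt _ j.pos⟩ := by
        rw [Equiv.Perm.mul_apply, formPerm_ofFn_apply _ (Bf_inj m),
          List.formPerm_apply_of_notMem (Bf_not_mem m _)]
      rw [hrhs]
      apply Fin.ext
      simp only [Equiv.Perm.mul_apply]
      have hj := j.isLt
      have hj' : ((j : ℕ) + 1) % m < m := Nat.mod_lt _ j.pos
      have hB2 : ((Bf m ⟨((j : ℕ) + 1) % m, Nat.mod_lt _ j.pos⟩ : Fin (2 * m)) : ℕ)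
          = if 2 * (((j : ℕ) + 1) % m) + 1 < m then 4 * (((j : ℕ) + 1) % m) + 2
            else 4 * m - 4 * (((j : ℕ) + 1) % m) - 3 := rfl
      have hmod : (((j : ℕ) + 1) % m = (j : ℕ) + 1 ∧ (j : ℕ) + 1 < m) ∨
          (((j : ℕ) + 1) % m = 0 ∧ (j : ℕ) + 1 = m) := by
        rcases Nat.lt_or_ge ((j : ℕ) + 1) m with h | h
        · exact Or.inl ⟨Nat.mod_eq_of_lt h, h⟩
        · have heq : (j : ℕ) + 1 = m := by omega
          exact Or.inr ⟨by rw [heq, Nat.mod_self], heq⟩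
      rcases hmod with ⟨hmod, hlt⟩ | ⟨hmod, heq⟩ <;>
        rw [hcomm, hB2, Bf_val, hmod] <;> split_ifs <;> omega
  -- cycle type computation
  have hndA : (List.ofFn (Af m)).Nodup := List.nodup_ofFn.mpr (Af_inj m)
  have hndB : (List.ofFn (Bf m)).Nodup := List.nodup_ofFn.mpr (Bf_inj m)
  have hlenA : (List.ofFn (Af m)).length = m := by simp
  have hlenB : (List.ofFn (Bf m)).length = m := by simp
  have hcA : ((List.ofFn (Af m)).formPerm).IsCycle :=
    List.isCycle_formPerm hndA (by rw [hlenA]; exact hm)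
  have hcB : ((List.ofFn (Bf m)).formPerm).IsCycle :=
    List.isCycle_formPerm hndB (by rw [hlenB]; exact hm)
  have hdisj : Equiv.Perm.Disjoint (List.ofFn (Af m)).formPerm (List.ofFn (Bf m)).formPerm := by
    intro x
    rcases cover m x with ⟨j, rfl⟩ | ⟨j, rfl⟩
    · exact Or.inr (List.formPerm_apply_of_notMem (Af_not_mem m j))
    · exact Or.inl (List.formPerm_apply_of_notMem (Bf_not_mem m j))
  have hsA : ((List.ofFn (Af m)).formPerm).support.card = m := by
    rw [List.support_formPerm_of_nodup _ hndA
      (fun x hx => by apply_fun List.length at hx; rw [hlenA] at hx; simp at hx; omega)]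
    rw [List.toFinset_card_of_nodup hndA, hlenA]
  have hsB : ((List.ofFn (Bf m)).formPerm).support.card = m := by
    rw [List.support_formPerm_of_nodup _ hndB
      (fun x hx => by apply_fun List.length at hx; rw [hlenB] at hx; simp at hx; omega)]
    rw [List.toFinset_card_of_nodup hndB, hlenB]
  rw [hmain, Equiv.Perm.Disjoint.cycleType_mul hdisj, hcA.cycleType, hcB.cycleType, hsA, hsB]
  rfl
end
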